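/- Let K_1, K_2 > 0 with k_j = ln K_j, let ω > 0 and let s < 3/2 be real. For j = 1, 2 and ξ ∈ ℂ with Im ξ = ω, let Ĝ_j(ξ) = ∫_ℝ e^{−i·x·ξ}·(K_j − e^x)_+ dx (an absolutely convergent integral). Then ∫_ℝ (1 + t²)^s · Ĝ_1(t + iω) · conj(Ĝ_2(t + iω)) dt = (K_1·K_2)^{1+ω} · ∫_ℝ e^{−i·t·(k_1 − k_2)} · (1 + t²)^s / ((t² + ω²)·(t² + (ω+1)²)) dt, and both integrals converge absolutely. (The weighted Sobolev-space scalar product (G_1, G_2)_{s;ω} of two put payoffs G_j(x) = (K_j − e^x)_+, computed in the dual space; used to build approximate static hedging portfolios.) -/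

import Mathlib

open MeasureTheory Set

lemma integrableOn_rexp_mul_Iic {a : ℝ} (ha : 0 < a) (k : ℝ) :
    IntegrableOn (fun x : ℝ => Real.exp (a * x)) (Iic k) := by
  rw [← (Measure.measurePreserving_neg (volume : Measure ℝ)).integrableOn_comp_preimage
      (Homeomorph.neg ℝ).measurableEmbedding]
  simp only [Function.comp_def, neg_preimage, neg_Iic, mul_neg, ← neg_mul]
  rw [integrableOn_Ici_iff_integrableOn_Ioi]
  exact exp_neg_integrableOn_Ioi (-k) ha

lemma integrableOn_cexp_mul_Iic {c : ℂ} (hc : 0 < c.re) (k : ℝ) :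
    IntegrableOn (fun x : ℝ => Complex.exp (c * x)) (Iic k) := by
  have h := integrableOn_rexp_mul_Iic hc k
  refine h.mono' ?_ ?_
  · exact (Complex.continuous_exp.comp
      (continuous_const.mul Complex.continuous_ofReal)).aestronglyMeasurable
  · filter_upwards with x
    rw [Complex.norm_exp]
    simp [Complex.mul_re]

lemma hasDerivAt_cexp_mul (c : ℂ) (x : ℝ) :
    HasDerivAt (fun x : ℝ => Complex.exp (c * x)) (c * Complex.exp (c * x)) x := by
  have h1 : HasDerivAt (fun x : ℝ => c * (x : ℂ)) c x := by
    simpa using (Complex.ofRealCLM.hasDerivAt (x := x)).const_mul c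
  simpa [mul_comm] using h1.cexp

lemma integral_cexp_mul_Iic {c : ℂ} (hc : 0 < c.re) (k : ℝ) :
    ∫ x in Iic k, Complex.exp (c * x) = Complex.exp (c * k) / c := by
  have hc0 : c ≠ 0 := fun h => by simp [h] at hc
  have := integral_Iic_of_hasDerivAt_of_tendsto'
    (f := fun x : ℝ => Complex.exp (c * x) / c) (f' := fun x : ℝ => Complex.exp (c * x))
    (a := k) (m := 0)
    (fun x _ => by simpa [mul_div_assoc, mul_div_cancel_left₀ _ hc0] using
      (hasDerivAt_cexp_mul c x).div_const c)
    (integrableOn_cexp_mul_Iic hc k) ?_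
  · simpa using this
  · rw [tendsto_zero_iff_norm_tendsto_zero]
    have : (fun x : ℝ => ‖Complex.exp (c * x) / c‖) = fun x => Real.exp (c.re * x) / ‖c‖ := by
      funext x
      rw [norm_div, Complex.norm_exp]
      simp [Complex.mul_re]
    rw [this]
    have h2 : Filter.Tendsto (fun x : ℝ => Real.exp (c.re * x)) Filter.atBot (nhds 0) :=
      Real.tendsto_exp_atBot.comp (Filter.tendsto_id.const_mul_atBot hc)
    simpa using h2.div_const ‖c‖

lemma put_transform (K ω : ℝ) (hK : 0 < K) (hω : 0 < ω) (t : ℝ) :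
    Integrable (fun x : ℝ => Complex.exp (-(Complex.I * x * ((t : ℂ) + ω * Complex.I))) *
        ((max (K - Real.exp x) 0 : ℝ) : ℂ)) ∧
    (∫ x : ℝ, Complex.exp (-(Complex.I * x * ((t : ℂ) + ω * Complex.I))) *
        ((max (K - Real.exp x) 0 : ℝ) : ℂ)) =
      ((K ^ (1 + ω) : ℝ) : ℂ) * Complex.exp (-(Complex.I * t * (Real.log K : ℂ))) /
        (((ω : ℂ) - Complex.I * t) * (((ω : ℂ) - Complex.I * t) + 1)) := by
  set c : ℂ := (ω : ℂ) - Complex.I * t with hc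
  have hcre : c.re = ω := by simp [hc]
  have hcre' : (c + 1).re = ω + 1 := by simp [hcre]
  have hcpos : 0 < c.re := by rw [hcre]; exact hω
  have hc1pos : 0 < (c + 1).re := by rw [hcre']; linarith
  have hc0 : c ≠ 0 := fun h => by rw [h] at hcre; simp at hcre; exact hω.ne' hcre.symm
  have hc10 : c + 1 ≠ 0 := fun h => by rw [h] at hcre'; simp at hcre'; linarith
  set k : ℝ := Real.log K with hk
  have harg : ∀ x : ℝ, -(Complex.I * x * ((t : ℂ) + ω * Complex.I)) = c * x := by
    intro x
    rw [hc]
    linear_combination (-(x : ℂ) * ω) * Complex.I_sq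
  have hf : (fun x : ℝ => Complex.exp (-(Complex.I * x * ((t : ℂ) + ω * Complex.I))) *
        ((max (K - Real.exp x) 0 : ℝ) : ℂ)) =
      Set.indicator (Iic k) (fun x : ℝ =>
        (K : ℂ) * Complex.exp (c * x) - Complex.exp ((c + 1) * x)) := by
    funext x
    rw [harg]
    by_cases hx : x ≤ k
    · have hex : Real.exp x ≤ K :=
        (Real.exp_le_exp.mpr hx).trans_eq (Real.exp_log hK)
      rw [Set.indicator_of_mem (Set.mem_Iic.mpr hx)]
      rw [max_eq_left (by linarith)]
      have : Complex.exp ((c + 1) * x) = Complex.exp (c * x) * (Real.exp x : ℂ) := by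
        rw [Complex.ofReal_exp, ← Complex.exp_add]; ring_nf
      rw [this]
      push_cast
      ring
    · rw [Set.indicator_of_notMem (by simpa using hx)]
      have : K < Real.exp x :=
        (Real.exp_log hK).symm.trans_lt (Real.exp_lt_exp.mpr (lt_of_not_ge hx))
      rw [max_eq_right (by linarith)]
      simp
  have hint : IntegrableOn (fun x : ℝ =>
      (K : ℂ) * Complex.exp (c * x) - Complex.exp ((c + 1) * x)) (Iic k) :=
    ((integrableOn_cexp_mul_Iic hcpos k).const_mul _).sub (integrableOn_cexp_mul_Iic hc1pos k)
  constructor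
  · rw [hf, integrable_indicator_iff measurableSet_Iic]
    exact hint
  · rw [hf, integral_indicator measurableSet_Iic]
    rw [integral_sub ((integrableOn_cexp_mul_Iic hcpos k).const_mul _)
      (integrableOn_cexp_mul_Iic hc1pos k), integral_const_mul,
      integral_cexp_mul_Iic hcpos, integral_cexp_mul_Iic hc1pos]
    have hek : Complex.exp (c * k) = ((K ^ ω : ℝ) : ℂ) * Complex.exp (-(Complex.I * t * (k : ℂ))) := by
      have : c * k = ((ω * k : ℝ) : ℂ) + -(Complex.I * t * (k : ℂ)) := by rw [hc]; push_cast; ring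
      have h2 : (K ^ ω : ℝ) = Real.exp (ω * k) := by
        rw [Real.rpow_def_of_pos hK, mul_comm]
      rw [this, Complex.exp_add, h2, Complex.ofReal_exp]
    have hek1 : Complex.exp ((c + 1) * k)
        = ((K ^ (1 + ω) : ℝ) : ℂ) * Complex.exp (-(Complex.I * t * (k : ℂ))) := by
      have : (c + 1) * k = (((1 + ω) * k : ℝ) : ℂ) + -(Complex.I * t * (k : ℂ)) := by
        rw [hc]; push_cast; ring
      have h2 : (K ^ (1 + ω) : ℝ) = Real.exp ((1 + ω) * k) := by
        rw [Real.rpow_def_of_pos hK, mul_comm]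
      rw [this, Complex.exp_add, h2, Complex.ofReal_exp]
    rw [hek, hek1]
    have hKpow : (K : ℝ) * K ^ ω = K ^ (1 + ω) := by
      rw [Real.rpow_add hK, Real.rpow_one]
    field_simp
    push_cast [← hKpow]
    ring

lemma weight_integrable (ω s : ℝ) (hω : 0 < ω) (hs : s < 3 / 2) (r : ℝ) :
    Integrable (fun t : ℝ => Complex.exp (-(Complex.I * t * (r : ℂ))) *
      (((1 + t ^ 2) ^ s / ((t ^ 2 + ω ^ 2) * (t ^ 2 + (ω + 1) ^ 2)) : ℝ) : ℂ)) := by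
  have hbase : Integrable (fun t : ℝ => ((1 : ℝ) + t ^ 2) ^ (s - 2)) := by
    have h0 := integrable_rpow_neg_one_add_norm_sq (E := ℝ) (μ := (volume : Measure ℝ))
      (r := 4 - 2 * s) (by simp; linarith)
    have : (fun x : ℝ => ((1 : ℝ) + ‖x‖ ^ 2) ^ (-(4 - 2 * s) / 2))
        = fun t : ℝ => ((1 : ℝ) + t ^ 2) ^ (s - 2) := by
      funext x
      rw [Real.norm_eq_abs, sq_abs]
      congr 1
      ring
    rwa [this] at h0
  set m : ℝ := min 1 (ω ^ 2) with hm
  have hmpos : 0 < m := lt_min one_pos (by positivity)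
  have hbound : ∀ t : ℝ, ‖Complex.exp (-(Complex.I * t * (r : ℂ))) *
      (((1 + t ^ 2) ^ s / ((t ^ 2 + ω ^ 2) * (t ^ 2 + (ω + 1) ^ 2)) : ℝ) : ℂ)‖
      ≤ m⁻¹ * ((1 : ℝ) + t ^ 2) ^ (s - 2) := by
    intro t
    have h1t : (0 : ℝ) < 1 + t ^ 2 := by positivity
    have hD : (0 : ℝ) < (t ^ 2 + ω ^ 2) * (t ^ 2 + (ω + 1) ^ 2) := by positivity
    have hnorm1 : ‖Complex.exp (-(Complex.I * t * (r : ℂ)))‖ = 1 := by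
      rw [Complex.norm_exp]
      simp [Complex.mul_re]
    rw [norm_mul, hnorm1, one_mul, Complex.norm_real, Real.norm_eq_abs,
      abs_of_nonneg (by positivity)]
    have hden : m * (1 + t ^ 2) ^ 2 ≤ (t ^ 2 + ω ^ 2) * (t ^ 2 + (ω + 1) ^ 2) := by
      have hm1 : m ≤ 1 := min_le_left _ _
      have hm2 : m ≤ ω ^ 2 := min_le_right _ _
      nlinarith [sq_nonneg t, sq_nonneg ω, sq_nonneg (t ^ 2)]
    have key : (1 + t ^ 2) ^ s / ((t ^ 2 + ω ^ 2) * (t ^ 2 + (ω + 1) ^ 2))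
        ≤ (1 + t ^ 2) ^ s / (m * (1 + t ^ 2) ^ 2) :=
      div_le_div_of_nonneg_left (Real.rpow_nonneg h1t.le s) (by positivity) hden
    refine key.trans (le_of_eq ?_)
    have hpow : (1 + t ^ 2) ^ s = (1 + t ^ 2) ^ (s - 2) * (1 + t ^ 2) ^ 2 := by
      rw [← Real.rpow_natCast (1 + t ^ 2) 2, ← Real.rpow_add h1t]
      norm_num
    rw [hpow]
    field_simp
  have hmeas : AEStronglyMeasurable (fun t : ℝ => Complex.exp (-(Complex.I * t * (r : ℂ))) *
      (((1 + t ^ 2) ^ s / ((t ^ 2 + ω ^ 2) * (t ^ 2 + (ω + 1) ^ 2)) : ℝ) : ℂ)) volume := by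
    apply Continuous.aestronglyMeasurable
    apply Continuous.mul
    · exact Complex.continuous_exp.comp (by continuity)
    · apply Complex.continuous_ofReal.comp
      apply Continuous.div
      · exact (continuous_const.add (continuous_pow 2)).rpow_const
          (fun t => Or.inl (by show (1:ℝ) + t ^ 2 ≠ 0; positivity))
      · continuity
      · intro t; positivity
  exact (hbase.const_mul m⁻¹).mono' hmeas (Filter.Eventually.of_forall hbound)

theorem stmt_10 (K₁ K₂ ω s : ℝ) (hK₁ : 0 < K₁) (hK₂ : 0 < K₂) (hω : 0 < ω) (hs : s < 3 / 2)
    (Ghat : ℝ → ℂ → ℂ)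
    (hGhat : ∀ (Kj : ℝ) (ξ : ℂ), Ghat Kj ξ =
      ∫ x : ℝ, Complex.exp (-(Complex.I * x * ξ)) * ((max (Kj - Real.exp x) 0 : ℝ) : ℂ)) :
    (∀ t : ℝ, Integrable (fun x : ℝ =>
      Complex.exp (-(Complex.I * x * ((t : ℂ) + ω * Complex.I))) *
        ((max (K₁ - Real.exp x) 0 : ℝ) : ℂ))) ∧
    (∀ t : ℝ, Integrable (fun x : ℝ =>
      Complex.exp (-(Complex.I * x * ((t : ℂ) + ω * Complex.I))) *
        ((max (K₂ - Real.exp x) 0 : ℝ) : ℂ))) ∧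
    Integrable (fun t : ℝ =>
      (((1 + t ^ 2) ^ s : ℝ) : ℂ) * Ghat K₁ ((t : ℂ) + ω * Complex.I) *
        (starRingEnd ℂ) (Ghat K₂ ((t : ℂ) + ω * Complex.I))) ∧
    Integrable (fun t : ℝ =>
      Complex.exp (-(Complex.I * t * ((Real.log K₁ - Real.log K₂ : ℝ) : ℂ))) *
        (((1 + t ^ 2) ^ s / ((t ^ 2 + ω ^ 2) * (t ^ 2 + (ω + 1) ^ 2)) : ℝ) : ℂ)) ∧
    (∫ t : ℝ, (((1 + t ^ 2) ^ s : ℝ) : ℂ) * Ghat K₁ ((t : ℂ) + ω * Complex.I) *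
        (starRingEnd ℂ) (Ghat K₂ ((t : ℂ) + ω * Complex.I)))
      = (((K₁ * K₂) ^ (1 + ω) : ℝ) : ℂ) *
          ∫ t : ℝ, Complex.exp (-(Complex.I * t * ((Real.log K₁ - Real.log K₂ : ℝ) : ℂ))) *
            (((1 + t ^ 2) ^ s / ((t ^ 2 + ω ^ 2) * (t ^ 2 + (ω + 1) ^ 2)) : ℝ) : ℂ) := by
  have h₁ := fun t => put_transform K₁ ω hK₁ hω t
  have h₂ := fun t => put_transform K₂ ω hK₂ hω t
  have hRHS := weight_integrable ω s hω hs (Real.log K₁ - Real.log K₂)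
  -- pointwise identity
  have hpt : ∀ t : ℝ, (((1 + t ^ 2) ^ s : ℝ) : ℂ) * Ghat K₁ ((t : ℂ) + ω * Complex.I) *
        (starRingEnd ℂ) (Ghat K₂ ((t : ℂ) + ω * Complex.I))
      = (((K₁ * K₂) ^ (1 + ω) : ℝ) : ℂ) *
          (Complex.exp (-(Complex.I * t * ((Real.log K₁ - Real.log K₂ : ℝ) : ℂ))) *
            (((1 + t ^ 2) ^ s / ((t ^ 2 + ω ^ 2) * (t ^ 2 + (ω + 1) ^ 2)) : ℝ) : ℂ)) := by
    intro t
    rw [hGhat, hGhat, (h₁ t).2, (h₂ t).2]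
    set d : ℂ := (ω : ℂ) - Complex.I * t with hd
    have hd0 : d ≠ 0 := fun h => by
      have := congrArg Complex.re h
      simp [hd, Complex.sub_re, Complex.mul_re] at this <;> linarith
    have hd10 : d + 1 ≠ 0 := fun h => by
      have := congrArg Complex.re h
      simp [hd, Complex.add_re, Complex.sub_re, Complex.mul_re] at this <;> linarith
    have hcd : (starRingEnd ℂ) d = (ω : ℂ) + Complex.I * t := by
      simp [hd, map_sub, map_mul, Complex.conj_ofReal, Complex.conj_I] <;> ring
    have hcd0 : (ω : ℂ) + Complex.I * t ≠ 0 := fun h => by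
      have := congrArg Complex.re h
      simp [Complex.add_re, Complex.mul_re] at this <;> linarith
    have hcd10 : (ω : ℂ) + Complex.I * t + 1 ≠ 0 := fun h => by
      have := congrArg Complex.re h
      simp [Complex.add_re, Complex.mul_re] at this <;> linarith
    have hconj : (starRingEnd ℂ) (((K₂ ^ (1 + ω) : ℝ) : ℂ) *
          Complex.exp (-(Complex.I * t * (Real.log K₂ : ℂ))) / (d * (d + 1)))
        = ((K₂ ^ (1 + ω) : ℝ) : ℂ) * Complex.exp (Complex.I * t * (Real.log K₂ : ℂ)) /
          (((ω : ℂ) + Complex.I * t) * (((ω : ℂ) + Complex.I * t) + 1)) := by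
      rw [map_div₀, map_mul, map_mul, map_add, hcd, map_one, Complex.conj_ofReal,
        ← Complex.exp_conj]
      congr 2
      simp [map_mul, Complex.conj_ofReal, Complex.conj_I] <;> ring
    rw [hconj]
    have e1 : d * ((ω : ℂ) + Complex.I * t) = ((t ^ 2 + ω ^ 2 : ℝ) : ℂ) := by
      rw [hd]; push_cast
      linear_combination (-(t : ℂ) ^ 2) * Complex.I_sq
    have e2 : (d + 1) * (((ω : ℂ) + Complex.I * t) + 1) = ((t ^ 2 + (ω + 1) ^ 2 : ℝ) : ℂ) := by
      rw [hd]; push_cast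
      linear_combination (-(t : ℂ) ^ 2) * Complex.I_sq
    have e3 : Complex.exp (-(Complex.I * t * (Real.log K₁ : ℂ))) *
          Complex.exp (Complex.I * t * (Real.log K₂ : ℂ))
        = Complex.exp (-(Complex.I * t * ((Real.log K₁ - Real.log K₂ : ℝ) : ℂ))) := by
      rw [← Complex.exp_add]
      congr 1
      push_cast
      ring
    have e4 : ((K₁ * K₂) ^ (1 + ω) : ℝ) = K₁ ^ (1 + ω) * K₂ ^ (1 + ω) :=
      Real.mul_rpow hK₁.le hK₂.le
    have hx1 : ((t ^ 2 + ω ^ 2 : ℝ) : ℂ) ≠ 0 := by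
      rw [← e1]; exact mul_ne_zero hd0 hcd0
    have hx2 : ((t ^ 2 + (ω + 1) ^ 2 : ℝ) : ℂ) ≠ 0 := by
      rw [← e2]; exact mul_ne_zero hd10 hcd10
    rw [e4, Complex.ofReal_div, Complex.ofReal_mul, Complex.ofReal_mul, ← e1, ← e2, ← e3]
    field_simp
  refine ⟨fun t => (h₁ t).1, fun t => (h₂ t).1, ?_, hRHS, ?_⟩
  · exact (hRHS.const_mul _).congr (Filter.Eventually.of_forall fun t => (hpt t).symm)
  · rw [integral_congr_ae (Filter.Eventually.of_forall hpt), integral_const_mul]
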